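/- arXiv:1912.12810 — 3 statements merged into one kernel-verified Lean document; each statement's English description precedes it below -/
import Mathlib

section
/- Let α > 0, let a < t be real numbers, and let f : ℝ → ℝ be continuous on [a, t]. Then the Grünwald–Letnikov sums converge to the Riemann–Liouville fractional integral: the sequence n ↦ ((t−a)/n)^α · Σ_{k=0}^{n} (Γ(α+k)/(Γ(α) · k!)) · f(t − k(t−a)/n) tends, as n → ∞, to (1/Γ(α)) · ∫_a^t (t−s)^(α−1) · f(s) ds. -/
open MeasureTheory Real Filter

private lemma gammaProdAux (α : ℝ) (hα : 0 < α) (k : ℕ) :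
    Real.Gamma (α + k) = Real.Gamma α * ∏ j ∈ Finset.range k, (α + j) := by
  induction k with
  | zero => simp
  | succ k ih =>
    have h1 : α + ((k + 1 : ℕ) : ℝ) = (α + k) + 1 := by push_cast; ring
    rw [h1, Real.Gamma_add_one (by positivity), ih, Finset.prod_range_succ]
    ring

private lemma rhoTendstoAux (α : ℝ) (hα : 0 < α) :
    Filter.Tendsto
      (fun k : ℕ => Real.Gamma (α + k) / (Nat.factorial k) * (k : ℝ) ^ ((1:ℝ) - α))
      Filter.atTop (nhds 1) := by
  have hΓ : (0:ℝ) < Real.Gamma α := Real.Gamma_pos_of_pos hα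
  have h1 : Tendsto (fun k : ℕ => α / (α + k)) atTop (nhds 0) :=
    tendsto_const_nhds.div_atTop
      (tendsto_atTop_add_const_left _ α tendsto_natCast_atTop_atTop)
  have h2 : Tendsto (fun k : ℕ => (k : ℝ) / (α + k)) atTop (nhds 1) := by
    have heq : ∀ k : ℕ, (k : ℝ) / (α + k) = 1 - α / (α + k) := by
      intro k
      have hne : α + (k:ℝ) ≠ 0 := by positivity
      field_simp
      ring
    simp_rw [heq]
    simpa using tendsto_const_nhds.sub h1
  have h3 : Tendsto
      (fun k : ℕ => Real.Gamma α * ((k : ℝ) / (α + k)) * (Real.GammaSeq α k)⁻¹)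
      atTop (nhds 1) := by
    have := (tendsto_const_nhds (x := Real.Gamma α) (f := atTop (α := ℕ))).mul h2 |>.mul
      ((Real.GammaSeq_tendsto_Gamma α).inv₀ hΓ.ne')
    simpa [mul_inv_cancel₀ hΓ.ne'] using this
  refine h3.congr' ?_
  filter_upwards [eventually_ge_atTop 1] with k hk
  have hk0 : (0:ℝ) < k := by exact_mod_cast hk
  have hΓk : (0:ℝ) < Real.Gamma (α + k) := Real.Gamma_pos_of_pos (by positivity)
  have hprod : (∏ j ∈ Finset.range (k+1), (α + (j:ℝ))) =
      (α + k) * Real.Gamma (α + k) / Real.Gamma α := by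
    have hgp := gammaProdAux α hα (k+1)
    have h1' : α + ((k + 1 : ℕ) : ℝ) = (α + k) + 1 := by push_cast; ring
    rw [h1', Real.Gamma_add_one (by positivity)] at hgp
    rw [eq_div_iff hΓ.ne']
    linear_combination -hgp
  have hGS : Real.GammaSeq α k =
      (k:ℝ) ^ α * (Nat.factorial k) * Real.Gamma α / ((α + k) * Real.Gamma (α + k)) := by
    rw [Real.GammaSeq, hprod, div_div_eq_mul_div]
  have hrp : (k:ℝ) ^ ((1:ℝ) - α) = (k:ℝ) / (k:ℝ) ^ α := by
    rw [Real.rpow_sub hk0, Real.rpow_one]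
  have hfac : (0:ℝ) < (Nat.factorial k : ℝ) := by exact_mod_cast Nat.factorial_pos k
  have hka : (0:ℝ) < (k:ℝ) ^ α := Real.rpow_pos_of_pos hk0 α
  rw [hGS, hrp]
  field_simp

private lemma stepIntegralAux (h : ℝ) (hh : 0 < h) (g : ℕ → ℝ) :
    ∀ n : ℕ, IntervalIntegrable (fun u => g ⌈u / h⌉₊) MeasureTheory.volume 0 ((n:ℝ) * h) ∧
      ∫ u in (0:ℝ)..((n:ℝ) * h), g ⌈u / h⌉₊ = h * ∑ k ∈ Finset.range n, g (k + 1) := by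
  intro n
  induction n with
  | zero =>
    constructor
    · simp only [Nat.cast_zero, zero_mul]
      exact IntervalIntegrable.refl
    · simp
  | succ n ih =>
    have hle : (n:ℝ) * h ≤ ((n:ℝ) + 1) * h := by nlinarith
    have hceil : ∀ u ∈ Set.Ioc ((n:ℝ)*h) (((n:ℝ)+1)*h), ⌈u/h⌉₊ = n + 1 := by
      intro u hu
      refine le_antisymm (Nat.ceil_le.mpr ?_) (Nat.add_one_le_ceil_iff.mpr ?_)
      · push_cast
        rw [div_le_iff₀ hh]
        exact hu.2
      · rw [lt_div_iff₀ hh]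
        exact hu.1
    have hint : IntervalIntegrable (fun u => g ⌈u/h⌉₊) volume ((n:ℝ)*h) (((n:ℝ)+1)*h) := by
      apply (intervalIntegrable_const (c := g (n+1))).congr
      intro u hu
      rw [Set.uIoc_of_le hle] at hu
      simp only [hceil u hu]
    have hcellval : ∫ u in ((n:ℝ)*h)..(((n:ℝ)+1)*h), g ⌈u/h⌉₊ = h * g (n+1) := by
      rw [intervalIntegral.integral_congr_ae
        (g := fun _ => g (n+1))
        (Filter.Eventually.of_forall fun u hu =>
          congrArg g (hceil u (by rwa [Set.uIoc_of_le hle] at hu))),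
        intervalIntegral.integral_const, smul_eq_mul]
      ring
    have hcast : ((n + 1 : ℕ) : ℝ) * h = ((n:ℝ) + 1) * h := by push_cast; ring
    constructor
    · rw [hcast]
      exact ih.1.trans hint
    · rw [hcast, ← intervalIntegral.integral_add_adjacent_intervals ih.1 hint, ih.2, hcellval,
        Finset.sum_range_succ, mul_add]

theorem gl_tendsto_rl (α a t : ℝ) (hα : 0 < α) (hat : a < t) (f : ℝ → ℝ)
    (hf : ContinuousOn f (Set.Icc a t)) :
    Filter.Tendsto
      (fun n : ℕ =>
        ((t - a) / n) ^ α *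
          ∑ k ∈ Finset.range (n + 1),
            (Real.Gamma (α + k) / (Real.Gamma α * (Nat.factorial k))) *
              f (t - k * (t - a) / n))
      Filter.atTop
      (nhds ((1 / Real.Gamma α) * ∫ s in a..t, (t - s) ^ (α - 1) * f s)) := by
  have hT : (0:ℝ) < t - a := sub_pos.mpr hat
  set T := t - a with hTdef
  have hΓ : (0:ℝ) < Real.Gamma α := Real.Gamma_pos_of_pos hα
  set F : ℝ → ℝ := fun u => f (t - u) with hFdef
  have hFc : ContinuousOn F (Set.Icc 0 T) := by
    apply hf.comp (Continuous.continuousOn (by continuity))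
    intro u hu
    exact ⟨by simp only [hTdef] at hu; linarith [hu.2], by linarith [hu.1]⟩
  obtain ⟨M, hM⟩ := isCompact_Icc.exists_bound_of_continuousOn hFc
  have hM0 : 0 ≤ M := le_trans (norm_nonneg _) (hM 0 ⟨le_refl 0, hT.le⟩)
  set ρ : ℕ → ℝ := fun k => Real.Gamma (α + k) / (Nat.factorial k) * (k:ℝ) ^ ((1:ℝ) - α)
    with hρdef
  have hρt : Tendsto ρ atTop (nhds 1) := rhoTendstoAux α hα
  have hρnn : ∀ k, 0 ≤ ρ k := by
    intro k
    have h1 : (0:ℝ) < Real.Gamma (α + k) := Real.Gamma_pos_of_pos (by positivity)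
    have h2 : (0:ℝ) < (Nat.factorial k : ℝ) := by exact_mod_cast Nat.factorial_pos k
    have h3 : (0:ℝ) ≤ (k:ℝ) ^ ((1:ℝ) - α) := Real.rpow_nonneg (Nat.cast_nonneg k) _
    exact mul_nonneg (le_of_lt (div_pos h1 h2)) h3
  obtain ⟨R, hR⟩ := hρt.bddAbove_range
  have hRb : ∀ k, ρ k ≤ R := fun k => hR ⟨k, rfl⟩
  have hR0 : 0 ≤ R := le_trans (hρnn 0) (hRb 0)
  set G : ℕ → ℕ → ℝ := fun n k => ρ k * ((k:ℝ) * (T/n)) ^ (α - 1) * F ((k:ℝ) * (T/n))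
    with hGdef
  set Φ : ℕ → ℝ → ℝ := fun n u => G n ⌈u / (T/n)⌉₊ with hΦdef
  -- dominated convergence
  have hDCT : Tendsto (fun n => ∫ u in Set.Ioc (0:ℝ) T, Φ n u) atTop
      (nhds (∫ u in Set.Ioc (0:ℝ) T, u ^ (α-1) * F u)) := by
    rw [← tendsto_add_atTop_iff_nat 1]
    apply MeasureTheory.tendsto_integral_of_dominated_convergence
      (bound := fun u => R * (u ^ (α-1) + T ^ (α-1)) * M)
    · intro m
      exact ((Measurable.of_discrete (f := G (m+1))).comp
        (Nat.measurable_ceil.comp (measurable_id.div_const _))).aestronglyMeasurable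
    · have h1 : IntegrableOn (fun u : ℝ => u ^ (α-1)) (Set.Ioc 0 T) volume := by
        rw [← intervalIntegrable_iff_integrableOn_Ioc_of_le hT.le]
        exact intervalIntegral.intervalIntegrable_rpow' (by linarith)
      have h2 : IntegrableOn (fun _ : ℝ => T ^ (α-1)) (Set.Ioc 0 T) volume :=
        integrableOn_const measure_Ioc_lt_top.ne
      exact ((h1.add h2).const_mul R).mul_const M
    · intro m
      have hn : (0:ℝ) < ((m+1 : ℕ) : ℝ) := by exact_mod_cast Nat.succ_pos m
      have hh : (0:ℝ) < T / ((m+1:ℕ):ℝ) := div_pos hT hn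
      filter_upwards [ae_restrict_mem measurableSet_Ioc] with u hu
      set k := ⌈u / (T/((m+1:ℕ):ℝ))⌉₊ with hkdef
      have hkn : k ≤ m + 1 := Nat.ceil_le.mpr (by
        rw [div_le_iff₀ hh, show ((m+1:ℕ):ℝ) * (T/((m+1:ℕ):ℝ)) = T by field_simp]
        exact hu.2)
      have hklo : u ≤ (k:ℝ) * (T/((m+1:ℕ):ℝ)) := (div_le_iff₀ hh).mp (Nat.le_ceil _)
      have hkhi : (k:ℝ) * (T/((m+1:ℕ):ℝ)) ≤ T := by
        calc (k:ℝ) * (T/((m+1:ℕ):ℝ)) ≤ ((m+1:ℕ):ℝ) * (T/((m+1:ℕ):ℝ)) := by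
              apply mul_le_mul_of_nonneg_right _ hh.le
              exact_mod_cast hkn
          _ = T := by field_simp
      have hsnn0 : (0:ℝ) ≤ (k:ℝ) * (T/((m+1:ℕ):ℝ)) := le_trans hu.1.le hklo
      have hFb : ‖F ((k:ℝ) * (T/((m+1:ℕ):ℝ)))‖ ≤ M := hM _ ⟨hsnn0, hkhi⟩
      have hpow : ((k:ℝ) * (T/((m+1:ℕ):ℝ))) ^ (α-1) ≤ u ^ (α-1) + T ^ (α-1) := by
        rcases le_total α 1 with hc | hc
        · have h4 : ((k:ℝ) * (T/((m+1:ℕ):ℝ))) ^ (α-1) ≤ u ^ (α-1) :=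
            Real.rpow_le_rpow_of_nonpos hu.1 hklo (by linarith)
          have h5 : (0:ℝ) ≤ T ^ (α-1) := Real.rpow_nonneg hT.le _
          linarith
        · have h4 := Real.rpow_le_rpow hsnn0 hkhi (by linarith : (0:ℝ) ≤ α - 1)
          have h5 : (0:ℝ) ≤ u ^ (α-1) := Real.rpow_nonneg hu.1.le _
          linarith
      have hsnn : (0:ℝ) ≤ ((k:ℝ) * (T/((m+1:ℕ):ℝ))) ^ (α-1) :=
        Real.rpow_nonneg hsnn0 _
      show ‖ρ k * ((k:ℝ) * (T/((m+1:ℕ):ℝ))) ^ (α-1) * F ((k:ℝ) * (T/((m+1:ℕ):ℝ)))‖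
        ≤ R * (u ^ (α-1) + T ^ (α-1)) * M
      rw [norm_mul, norm_mul, Real.norm_eq_abs (ρ k), Real.norm_eq_abs,
        abs_of_nonneg (hρnn k), abs_of_nonneg hsnn]
      have hpownn : (0:ℝ) ≤ u ^ (α-1) + T ^ (α-1) := by
        have := Real.rpow_nonneg hu.1.le (α-1)
        have := Real.rpow_nonneg hT.le (α-1)
        linarith
      apply mul_le_mul _ hFb (norm_nonneg _) (mul_nonneg hR0 hpownn)
      exact mul_le_mul (hRb k) hpow hsnn hR0
    · filter_upwards [ae_restrict_mem measurableSet_Ioc] with u hu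
      set k : ℕ → ℕ := fun m => ⌈u / (T/((m+1:ℕ):ℝ))⌉₊ with hkdef
      have hh : ∀ m : ℕ, (0:ℝ) < T / ((m+1:ℕ):ℝ) :=
        fun m => div_pos hT (by exact_mod_cast Nat.succ_pos m)
      have hklo : ∀ m, u ≤ (k m : ℝ) * (T/((m+1:ℕ):ℝ)) :=
        fun m => (div_le_iff₀ (hh m)).mp (Nat.le_ceil _)
      have hkhi2 : ∀ m, (k m : ℝ) * (T/((m+1:ℕ):ℝ)) ≤ u + T/((m+1:ℕ):ℝ) := by
        intro m
        have h1 : (k m : ℝ) < u / (T/((m+1:ℕ):ℝ)) + 1 :=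
          Nat.ceil_lt_add_one (le_of_lt (div_pos hu.1 (hh m)))
        have h2 := mul_lt_mul_of_pos_right h1 (hh m)
        rw [add_mul, one_mul, div_mul_cancel₀ _ (hh m).ne'] at h2
        linarith
      have hkT : ∀ m, (k m : ℝ) * (T/((m+1:ℕ):ℝ)) ≤ T := by
        intro m
        have hkn : k m ≤ m + 1 := Nat.ceil_le.mpr (by
          rw [div_le_iff₀ (hh m), show ((m+1:ℕ):ℝ) * (T/((m+1:ℕ):ℝ)) = T by field_simp]
          exact hu.2)
        calc (k m:ℝ) * (T/((m+1:ℕ):ℝ)) ≤ ((m+1:ℕ):ℝ) * (T/((m+1:ℕ):ℝ)) := by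
              apply mul_le_mul_of_nonneg_right _ (hh m).le
              exact_mod_cast hkn
          _ = T := by field_simp
      have hh0 : Tendsto (fun m : ℕ => T / ((m+1:ℕ):ℝ)) atTop (nhds 0) := by
        exact (tendsto_const_div_atTop_nhds_zero_nat T).comp (tendsto_add_atTop_nat 1)
      have hs : Tendsto (fun m : ℕ => (k m : ℝ) * (T/((m+1:ℕ):ℝ))) atTop (nhds u) := by
        apply tendsto_of_tendsto_of_tendsto_of_le_of_le
          (g := fun _ : ℕ => u) (h := fun m : ℕ => u + T/((m+1:ℕ):ℝ))
          tendsto_const_nhds (by simpa using tendsto_const_nhds.add hh0) hklo hkhi2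
      have hkinf : Tendsto k atTop atTop := by
        rw [← tendsto_natCast_atTop_iff (R := ℝ)]
        apply tendsto_atTop_mono (fun m => Nat.le_ceil (u / (T/((m+1:ℕ):ℝ))))
        have heq : ∀ m : ℕ, u / (T/((m+1:ℕ):ℝ)) = u * ((m+1:ℕ):ℝ) / T := fun m =>
          div_div_eq_mul_div u T _
        have heq2 : ∀ m : ℕ, u * ((m+1:ℕ):ℝ) / T = u * ((m:ℝ) + 1) / T := by
          intro m; push_cast; ring
        simp_rw [heq, heq2]
        apply Tendsto.atTop_div_const hT
        apply Tendsto.const_mul_atTop hu.1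
        exact tendsto_atTop_add_const_right atTop 1 tendsto_natCast_atTop_atTop
      have hρk : Tendsto (fun m => ρ (k m)) atTop (nhds 1) := hρt.comp hkinf
      have hpowt : Tendsto (fun m => ((k m : ℝ) * (T/((m+1:ℕ):ℝ))) ^ (α-1)) atTop
          (nhds (u ^ (α-1))) :=
        ((Real.continuousAt_rpow_const u (α-1) (Or.inl hu.1.ne')).tendsto).comp hs
      have hFt : Tendsto (fun m => F ((k m : ℝ) * (T/((m+1:ℕ):ℝ)))) atTop (nhds (F u)) := by
        apply ((hFc u ⟨hu.1.le, hu.2⟩).tendsto).comp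
        apply tendsto_nhdsWithin_of_tendsto_nhds_of_eventually_within _ hs
        exact Filter.Eventually.of_forall fun m => ⟨le_trans hu.1.le (hklo m), hkT m⟩
      have hfin := (hρk.mul hpowt).mul hFt
      rw [one_mul] at hfin
      exact hfin
  -- the key algebraic identity for n ≥ 1
  have key : ∀ n : ℕ, 1 ≤ n →
      (T / n) ^ α *
          ∑ j ∈ Finset.range (n + 1),
            (Real.Gamma (α + j) / (Real.Gamma α * (Nat.factorial j))) *
              f (t - j * T / n)
        = (T/n) ^ α * f t + (1 / Real.Gamma α) * ∫ u in Set.Ioc (0:ℝ) T, Φ n u := by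
    intro n hn
    have hn0 : (0:ℝ) < (n:ℝ) := by exact_mod_cast hn
    have hh : (0:ℝ) < T / n := div_pos hT hn0
    have hTn : (n:ℝ) * (T/n) = T := by field_simp
    have hIoc : ∫ u in Set.Ioc (0:ℝ) T, Φ n u
        = (T/n) * ∑ j ∈ Finset.range n, G n (j+1) := by
      have h2 := (stepIntegralAux (T/n) hh (G n) n).2
      rw [hTn] at h2
      rw [← intervalIntegral.integral_of_le hT.le]
      exact h2
    rw [hIoc, Finset.sum_range_succ']
    have hzero : Real.Gamma (α + ((0:ℕ):ℝ)) / (Real.Gamma α * (Nat.factorial 0)) *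
        f (t - ((0:ℕ):ℝ) * T / n) = f t := by
      simp [div_self hΓ.ne']
    rw [hzero, mul_add, add_comm]
    congr 1
    rw [Finset.mul_sum, Finset.mul_sum, Finset.mul_sum]
    apply Finset.sum_congr rfl
    intro j _
    have hj : (0:ℝ) < ((j+1 : ℕ):ℝ) := by exact_mod_cast Nat.succ_pos j
    have hGval : G n (j+1) = ρ (j+1) * (((j+1:ℕ):ℝ) * (T/n)) ^ (α-1) *
        f (t - ((j+1:ℕ):ℝ) * (T/n)) := rfl
    have hρval : ρ (j+1) = Real.Gamma (α + ((j+1:ℕ):ℝ)) / ((Nat.factorial (j+1) : ℕ) : ℝ) *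
        ((j+1:ℕ):ℝ) ^ ((1:ℝ) - α) := rfl
    have hfarg : t - ((j+1:ℕ):ℝ) * T / n = t - ((j+1:ℕ):ℝ) * (T/n) := by
      rw [mul_div_assoc]
    have hmulpow : (((j+1:ℕ):ℝ) * (T/n)) ^ (α-1)
        = ((j+1:ℕ):ℝ) ^ (α-1) * (T/n) ^ (α-1) :=
      Real.mul_rpow hj.le hh.le
    have hjj : ((j+1:ℕ):ℝ) ^ ((1:ℝ) - α) * ((j+1:ℕ):ℝ) ^ (α-1) = 1 := by
      rw [← Real.rpow_add hj]
      norm_num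
    have hhh : (T/(n:ℝ)) * (T/n) ^ (α-1) = (T/n) ^ α := by
      rw [← Real.rpow_one_add' hh.le (by intro hc; exact hα.ne' (by linarith))]
      congr 1
      ring
    rw [hfarg, hGval, hρval, hmulpow]
    rw [show (T/(n:ℝ)) * (Real.Gamma (α + ((j+1:ℕ):ℝ)) / ((Nat.factorial (j+1) : ℕ) : ℝ) *
          ((j+1:ℕ):ℝ) ^ ((1:ℝ) - α) * (((j+1:ℕ):ℝ) ^ (α-1) * (T/(n:ℝ)) ^ (α-1)) *
          f (t - ((j+1:ℕ):ℝ) * (T/n)))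
        = Real.Gamma (α + ((j+1:ℕ):ℝ)) / ((Nat.factorial (j+1) : ℕ) : ℝ) *
          ((((j+1:ℕ):ℝ) ^ ((1:ℝ) - α) * ((j+1:ℕ):ℝ) ^ (α-1)) * ((T/(n:ℝ)) * (T/n) ^ (α-1))) *
          f (t - ((j+1:ℕ):ℝ) * (T/n)) from by ring, hjj, hhh]
    have hΓj : Real.Gamma (α + ((j+1:ℕ):ℝ)) ≠ 0 :=
      (Real.Gamma_pos_of_pos (add_pos hα hj)).ne'
    have hfacj : ((Nat.factorial (j+1) : ℝ)) ≠ 0 := by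
      exact_mod_cast (Nat.factorial_pos (j+1)).ne'
    field_simp
  -- change of variables for the limit
  have hCV : ∫ s in a..t, (t - s) ^ (α-1) * f s = ∫ u in Set.Ioc (0:ℝ) T, u ^ (α-1) * F u := by
    have h1 := intervalIntegral.integral_comp_sub_left (a := 0) (b := T)
      (fun s => (t - s) ^ (α-1) * f s) t
    simp only [sub_sub_cancel, sub_zero, hTdef] at h1
    rw [← h1, ← intervalIntegral.integral_of_le hT.le]
  -- limits
  have h0 : Tendsto (fun n : ℕ => (T/(n:ℝ)) ^ α) atTop (nhds 0) := by
    have h1 : Tendsto (fun n : ℕ => T/(n:ℝ)) atTop (nhds 0) :=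
      tendsto_const_div_atTop_nhds_zero_nat T
    have h2 := (Real.continuousAt_rpow_const 0 α (Or.inr hα.le)).tendsto.comp h1
    simpa [Real.zero_rpow hα.ne', Function.comp_def] using h2
  have hA : Tendsto (fun n : ℕ => (T/(n:ℝ)) ^ α * f t +
      (1 / Real.Gamma α) * ∫ u in Set.Ioc (0:ℝ) T, Φ n u) atTop
      (nhds ((1 / Real.Gamma α) * ∫ u in Set.Ioc (0:ℝ) T, u ^ (α-1) * F u)) := by
    have := (h0.mul_const (f t)).add (hDCT.const_mul (1 / Real.Gamma α))
    simpa using this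
  rw [hCV]
  refine Tendsto.congr' ?_ hA
  filter_upwards [eventually_ge_atTop 1] with n hn
  exact (key n hn).symm
end

section
/- Let n ≥ 1 be an integer, let a < T be real numbers, and let f : ℝ → ℝ be (n+1)-times continuously differentiable on [a, T]. Then for every t ∈ (a, T], the Caputo fractional derivative (1/Γ(n−α)) · ∫_a^t f^(n)(s) · (t−s)^(n−α−1) ds tends to f^(n)(t) as α → n from below (α ranging over (n−1, n)). -/
open MeasureTheory Real Filter

theorem caputo_tendsto_deriv_n (n : ℕ) (hn : 1 ≤ n) (a T : ℝ) (haT : a < T)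
    (f : ℝ → ℝ) (hf : ContDiffOn ℝ (n + 1) f (Set.Icc a T)) :
    ∀ t ∈ Set.Ioc a T,
      Filter.Tendsto
        (fun α : ℝ =>
          (1 / Real.Gamma (n - α)) *
            ∫ s in a..t, iteratedDerivWithin n f (Set.Icc a T) s * (t - s) ^ ((n : ℝ) - α - 1))
        (nhdsWithin (n : ℝ) (Set.Ioo ((n : ℝ) - 1) (n : ℝ)))
        (nhds (iteratedDerivWithin n f (Set.Icc a T) t)) := by
  intro t ht
  obtain ⟨hat, htT⟩ := ht
  set g : ℝ → ℝ := iteratedDerivWithin n f (Set.Icc a T) with hgdef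
  have hu : UniqueDiffOn ℝ (Set.Icc a T) := uniqueDiffOn_Icc haT
  have hgdiff : DifferentiableOn ℝ g (Set.Icc a T) :=
    hf.differentiableOn_iteratedDerivWithin (by exact_mod_cast Nat.lt_succ_self n) hu
  have hgcont : ContinuousOn g (Set.Icc a T) :=
    hf.continuousOn_iteratedDerivWithin (by exact_mod_cast Nat.le_succ n) hu
  have hg'cont : ContinuousOn (iteratedDerivWithin (n+1) f (Set.Icc a T)) (Set.Icc a T) :=
    hf.continuousOn_iteratedDerivWithin (by norm_cast) hu
  obtain ⟨C, hC⟩ := isCompact_Icc.exists_bound_of_continuousOn hg'cont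
  set K : ℝ := max C 0 with hKdef
  have hK0 : 0 ≤ K := le_max_right _ _
  have hbound : ∀ x ∈ Set.Icc a T, ‖derivWithin g (Set.Icc a T) x‖ ≤ K := by
    intro x hx
    rw [hgdef, ← iteratedDerivWithin_succ]
    exact (hC x hx).trans (le_max_left _ _)
  have hlip : ∀ s ∈ Set.Icc a t, |g s - g t| ≤ K * (t - s) := by
    intro s hs
    have hsT : s ∈ Set.Icc a T := ⟨hs.1, hs.2.trans htT⟩
    have htT' : t ∈ Set.Icc a T := ⟨hat.le, htT⟩
    have := (convex_Icc a T).norm_image_sub_le_of_norm_derivWithin_le hgdiff hbound htT' hsT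
    rw [Real.norm_eq_abs, Real.norm_eq_abs] at this
    rwa [abs_sub_comm s t, abs_of_nonneg (by linarith [hs.2] : (0:ℝ) ≤ t - s)] at this
  -- continuity facts about Gamma
  have hΓ1 : ContinuousAt Real.Gamma 1 := by
    refine (Real.differentiableAt_Gamma fun m => ?_).continuousAt
    intro h
    have h2 : (0:ℝ) ≤ (m:ℝ) := m.cast_nonneg
    linarith
  have hΓβ1 : Filter.Tendsto (fun β : ℝ => Real.Gamma (β + 1)) (nhds 0) (nhds 1) := by
    have h1 : Filter.Tendsto (fun β : ℝ => β + 1) (nhds 0) (nhds 1) := by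
      simpa using (continuous_add_right (1:ℝ)).tendsto (0:ℝ)
    simpa [Real.Gamma_one, Function.comp_def] using hΓ1.tendsto.comp h1
  have hta : (0:ℝ) < t - a := by linarith
  -- key limit in terms of β = n - α
  have key : Filter.Tendsto (fun β : ℝ => (1 / Real.Gamma β) * ∫ s in a..t, g s * (t - s) ^ (β - 1))
      (nhdsWithin 0 (Set.Ioo (0:ℝ) 1)) (nhds (g t)) := by
    -- decomposition valid for β ∈ Ioo 0 1
    have hdecomp : ∀ β ∈ Set.Ioo (0:ℝ) 1,
        (1 / Real.Gamma β) * ∫ s in a..t, g s * (t - s) ^ (β - 1)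
          = (1 / Real.Gamma β) * (∫ s in a..t, (g s - g t) * (t - s) ^ (β - 1))
            + g t * ((t - a) ^ β / Real.Gamma (β + 1)) := by
      intro β hβ
      obtain ⟨hβ0, hβ1⟩ := hβ
      have hint1 : IntervalIntegrable (fun s => (t - s) ^ (β - 1)) volume a t := by
        have := (intervalIntegral.intervalIntegrable_rpow' (a := 0) (b := t - a)
          (by linarith : (-1:ℝ) < β - 1)).comp_sub_left t
        simpa using this.symm
      have hgcont' : ContinuousOn (fun s => g s - g t) (Set.uIcc a t) := by
        refine (hgcont.mono ?_).sub continuousOn_const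
        rw [Set.uIcc_of_le hat.le]
        exact fun x hx => ⟨hx.1, hx.2.trans htT⟩
      have hint2 : IntervalIntegrable (fun s => (g s - g t) * (t - s) ^ (β - 1)) volume a t :=
        hint1.continuousOn_mul hgcont'
      have hintval : (∫ s in a..t, (t - s) ^ (β - 1)) = (t - a) ^ β / β := by
        rw [intervalIntegral.integral_comp_sub_left (fun x => x ^ (β - 1)) t, sub_self,
          integral_rpow (Or.inl (by linarith))]
        have hb : β - 1 + 1 = β := by ring
        rw [hb, Real.zero_rpow hβ0.ne', sub_zero]
      have hsplit : (∫ s in a..t, g s * (t - s) ^ (β - 1))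
          = (∫ s in a..t, (g s - g t) * (t - s) ^ (β - 1)) + g t * ((t - a) ^ β / β) := by
        rw [← hintval, ← intervalIntegral.integral_const_mul,
          ← intervalIntegral.integral_add hint2 (hint1.const_mul (g t))]
        congr 1; ext s; ring
      rw [hsplit, mul_add]
      congr 1
      have hΓpos : 0 < Real.Gamma β := Real.Gamma_pos_of_pos hβ0
      rw [Real.Gamma_add_one hβ0.ne']
      field_simp [mul_comm]
    refine Filter.Tendsto.congr' ?_ ?_
      (f₁ := fun β => (1 / Real.Gamma β) * (∫ s in a..t, (g s - g t) * (t - s) ^ (β - 1))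
            + g t * ((t - a) ^ β / Real.Gamma (β + 1)))
    · filter_upwards [self_mem_nhdsWithin] with β hβ
      exact (hdecomp β hβ).symm
    -- second summand tends to g t
    have hB : Filter.Tendsto (fun β : ℝ => g t * ((t - a) ^ β / Real.Gamma (β + 1)))
        (nhdsWithin 0 (Set.Ioo (0:ℝ) 1)) (nhds (g t)) := by
      have hr : Filter.Tendsto (fun β : ℝ => (t - a) ^ β) (nhds 0) (nhds 1) := by
        have := (Real.continuousAt_const_rpow (a := t - a) (b := 0) hta.ne').tendsto
        simpa [Real.rpow_zero] using this
      have : Filter.Tendsto (fun β : ℝ => g t * ((t - a) ^ β / Real.Gamma (β + 1)))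
          (nhds 0) (nhds (g t * (1 / 1))) :=
        tendsto_const_nhds.mul (hr.div hΓβ1 one_ne_zero)
      simpa using this.mono_left nhdsWithin_le_nhds
    -- first summand tends to 0
    have hA : Filter.Tendsto
        (fun β : ℝ => (1 / Real.Gamma β) * (∫ s in a..t, (g s - g t) * (t - s) ^ (β - 1)))
        (nhdsWithin 0 (Set.Ioo (0:ℝ) 1)) (nhds 0) := by
      set b : ℝ → ℝ := fun β => (β / Real.Gamma (β + 1)) * (K * ((t - a) ^ (β + 1) / (β + 1)))
        with hbdef
      have hb0 : Filter.Tendsto b (nhdsWithin 0 (Set.Ioo (0:ℝ) 1)) (nhds 0) := by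
        have hr : Filter.Tendsto (fun β : ℝ => (t - a) ^ (β + 1)) (nhds 0) (nhds (t - a)) := by
          have h1 : Filter.Tendsto (fun β : ℝ => β + 1) (nhds 0) (nhds 1) := by
            simpa using (continuous_add_right (1:ℝ)).tendsto (0:ℝ)
          have := (Real.continuousAt_const_rpow (a := t - a) (b := 1) hta.ne').tendsto.comp h1
          simpa [Real.rpow_one, Function.comp_def] using this
        have h1 : Filter.Tendsto (fun β : ℝ => β + 1) (nhds 0) (nhds 1) := by
          simpa using (continuous_add_right (1:ℝ)).tendsto (0:ℝ)
        have : Filter.Tendsto b (nhds 0)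
            (nhds ((0 / 1) * (K * ((t - a) / 1)))) :=
          ((tendsto_id.div hΓβ1 one_ne_zero).mul
            (tendsto_const_nhds.mul (hr.div h1 one_ne_zero)))
        simpa using this.mono_left nhdsWithin_le_nhds
      refine squeeze_zero_norm' ?_ hb0
      filter_upwards [self_mem_nhdsWithin] with β hβ
      obtain ⟨hβ0, hβ1⟩ := hβ
      have hΓpos : 0 < Real.Gamma β := Real.Gamma_pos_of_pos hβ0
      -- bound the integral
      have hEst : ‖∫ s in a..t, (g s - g t) * (t - s) ^ (β - 1)‖
          ≤ K * ((t - a) ^ (β + 1) / (β + 1)) := by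
        have hbint : IntervalIntegrable (fun s => K * (t - s) ^ β) volume a t := by
          refine IntervalIntegrable.const_mul ?_ K
          have hc : Continuous (fun x : ℝ => x ^ β) :=
            Real.continuous_rpow_const hβ0.le
          exact ((hc.comp (continuous_const.sub continuous_id)).continuousOn).intervalIntegrable
        have hbval : (∫ s in a..t, K * (t - s) ^ β) = K * ((t - a) ^ (β + 1) / (β + 1)) := by
          rw [intervalIntegral.integral_const_mul]
          rw [intervalIntegral.integral_comp_sub_left (fun x => x ^ β) t, sub_self,
            integral_rpow (Or.inl (by linarith))]
          rw [Real.zero_rpow (by positivity), sub_zero]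
        have hae : ∀ᵐ s ∂(volume.restrict (Set.uIoc a t)),
            ‖(g s - g t) * (t - s) ^ (β - 1)‖ ≤ K * (t - s) ^ β := by
          rw [Set.uIoc_of_le hat.le]
          filter_upwards [ae_restrict_mem measurableSet_Ioc] with s hs
          have hst : s ≤ t := hs.2
          have h1 : |g s - g t| ≤ K * (t - s) := hlip s ⟨hs.1.le, hst⟩
          have h2 : (0:ℝ) ≤ (t - s) ^ (β - 1) := Real.rpow_nonneg (by linarith) _
          rw [norm_mul, Real.norm_eq_abs, Real.norm_eq_abs, abs_of_nonneg h2]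
          calc |g s - g t| * (t - s) ^ (β - 1) ≤ (K * (t - s)) * (t - s) ^ (β - 1) := by
                exact mul_le_mul_of_nonneg_right h1 h2
            _ = K * ((t - s) * (t - s) ^ (β - 1)) := by ring
            _ = K * (t - s) ^ β := by
                congr 1
                rcases eq_or_lt_of_le hst with h | h
                · rw [h, sub_self, Real.zero_rpow hβ0.ne', zero_mul]
                · have hx : (0:ℝ) < t - s := by linarith
                  calc (t - s) * (t - s) ^ (β - 1)
                      = (t - s) ^ (1:ℝ) * (t - s) ^ (β - 1) := by rw [Real.rpow_one]
                    _ = (t - s) ^ (1 + (β - 1)) := (Real.rpow_add hx 1 (β - 1)).symm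
                    _ = (t - s) ^ β := by norm_num
        have := intervalIntegral.norm_integral_le_abs_of_norm_le hae hbint
        rw [hbval, abs_of_nonneg (mul_nonneg hK0 (div_nonneg (Real.rpow_nonneg hta.le _)
          (by linarith)))] at this
        exact this
      have hpos : (0:ℝ) < K * ((t - a) ^ (β + 1) / (β + 1)) ∨ True := Or.inr trivial
      have h1Γ : 1 / Real.Gamma β = β / Real.Gamma (β + 1) := by
        rw [Real.Gamma_add_one hβ0.ne']
        field_simp
      rw [norm_mul, Real.norm_eq_abs (1 / Real.Gamma β),
        abs_of_pos (by positivity : (0:ℝ) < 1 / Real.Gamma β), h1Γ, hbdef]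
      exact mul_le_mul_of_nonneg_left hEst (by positivity)
    have := hA.add hB
    simpa using this
  -- compose with α ↦ n - α
  have hcomp : Filter.Tendsto (fun α : ℝ => (n:ℝ) - α)
      (nhdsWithin (n : ℝ) (Set.Ioo ((n : ℝ) - 1) (n : ℝ)))
      (nhdsWithin 0 (Set.Ioo (0:ℝ) 1)) := by
    rw [tendsto_nhdsWithin_iff]
    constructor
    · have : Filter.Tendsto (fun α : ℝ => (n:ℝ) - α) (nhds (n:ℝ)) (nhds ((n:ℝ) - n)) :=
        (continuous_const.sub continuous_id).tendsto _
      simpa using this.mono_left nhdsWithin_le_nhds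
    · filter_upwards [self_mem_nhdsWithin] with α hα
      exact ⟨by linarith [hα.2], by linarith [hα.1]⟩
  exact key.comp hcomp
end

section
/- Let 0 < α < 1, σ ≥ 0, and let f : [0,∞) → ℝ be continuously differentiable with f(0) = 0, and suppose there is M > 0 with |f(t)| ≤ M·e^(σ t) and |f′(t)| ≤ M·e^(σ t) for all t ≥ 0. Then for every s > σ, ∫_0^∞ e^(−s t) · ( (1/Γ(1−α)) · ∫_0^t (t−u)^(−α) · f′(u) du ) dt = s^α · ∫_0^∞ e^(−s t) · f(t) dt. -/
open MeasureTheory Real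

lemma aux_rpow_integrable {α : ℝ} (hα0 : 0 < α) (hα1 : α < 1) {t : ℝ} (ht : 0 < t) :
    IntegrableOn (fun u : ℝ => (t - u) ^ (-α)) (Set.Ioo 0 t) := by
  have h1 : IntervalIntegrable (fun x : ℝ => x ^ (-α)) volume 0 t :=
    intervalIntegral.intervalIntegrable_rpow' (by linarith)
  have h2 := (h1.comp_sub_left t).symm
  simp only [sub_zero, sub_self] at h2
  exact ((intervalIntegrable_iff_integrableOn_Ioc_of_le ht.le).mp h2).mono_set
    Set.Ioo_subset_Ioc_self

lemma aux_rpow_integral {α : ℝ} (hα0 : 0 < α) (hα1 : α < 1) {t : ℝ} (ht : 0 < t) :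
    ∫ u in Set.Ioo 0 t, (t - u) ^ (-α) = t ^ (1 - α) / (1 - α) := by
  rw [← integral_Ioc_eq_integral_Ioo, ← intervalIntegral.integral_of_le ht.le,
    intervalIntegral.integral_comp_sub_left (fun x : ℝ => x ^ (-α)) t]
  simp only [sub_zero, sub_self]
  rw [integral_rpow (Or.inl (by linarith))]
  rw [Real.zero_rpow (by linarith : (0:ℝ) < -α + 1).ne']
  rw [show -α + 1 = 1 - α by ring]
  ring

lemma aux_rpow_exp_integrable {α s : ℝ} (hα1 : α < 1) (hα0 : -1 < -α) (hs : 0 < s) :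
    IntegrableOn (fun t : ℝ => t ^ (-α) * Real.exp (-s * t)) (Set.Ioi 0) := by
  have := integrableOn_rpow_mul_exp_neg_mul_rpow (p := 1) (s := -α) (b := s) hα0 zero_lt_one hs
  simpa [Real.rpow_one] using this

lemma aux_gamma_shift {α s : ℝ} (hα0 : 0 < α) (hα1 : α < 1) (hs : 0 < s) (u : ℝ) :
    ∫ t in Set.Ioi u, Real.exp (-s * t) * (t - u) ^ (-α)
      = Real.exp (-s * u) * (Real.Gamma (1 - α) * s ^ (α - 1)) := by
  have hshift : ∫ t in Set.Ioi u, Real.exp (-s * t) * (t - u) ^ (-α)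
      = ∫ t in Set.Ioi (0 : ℝ), Real.exp (-s * (t + u)) * t ^ (-α) := by
    rw [← integral_indicator measurableSet_Ioi, ← integral_indicator measurableSet_Ioi,
      ← integral_add_right_eq_self
        (Set.indicator (Set.Ioi u) fun t => Real.exp (-s * t) * (t - u) ^ (-α)) u]
    congr 1
    ext t
    by_cases h : 0 < t
    · rw [Set.indicator_of_mem (by simpa using h), Set.indicator_of_mem (Set.mem_Ioi.mpr h), add_sub_cancel_right]
    · rw [Set.indicator_of_notMem (by simpa using h), Set.indicator_of_notMem (by simpa using h)]
  rw [hshift]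
  have h2 : ∀ t ∈ Set.Ioi (0:ℝ), Real.exp (-s * (t + u)) * t ^ (-α)
      = Real.exp (-s * u) * (t ^ (-α) * Real.exp (-s * t)) := by
    intro t _
    rw [show -s * (t + u) = -s * u + -s * t by ring, Real.exp_add]
    ring
  rw [setIntegral_congr_fun measurableSet_Ioi h2, integral_const_mul]
  congr 1
  have h3 := Real.integral_rpow_mul_exp_neg_mul_Ioi (a := 1 - α) (r := s) (by linarith) hs
  have h4 : ∀ t ∈ Set.Ioi (0:ℝ), (t : ℝ) ^ (1 - α - 1) * Real.exp (-(s * t))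
      = t ^ (-α) * Real.exp (-s * t) := by
    intro t _
    rw [show (1 : ℝ) - α - 1 = -α by ring, neg_mul]
  rw [setIntegral_congr_fun measurableSet_Ioi h4] at h3
  rw [h3, one_div, Real.inv_rpow hs.le, ← Real.rpow_neg hs.le, neg_sub]
  ring


theorem laplace_caputo (α σ : ℝ) (hα0 : 0 < α) (hα1 : α < 1) (hσ : 0 ≤ σ)
    (f : ℝ → ℝ) (hf : ContDiffOn ℝ 1 f (Set.Ici 0)) (hf0 : f 0 = 0) (M : ℝ) (hM : 0 < M)
    (hfb : ∀ t : ℝ, 0 ≤ t → |f t| ≤ M * Real.exp (σ * t))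
    (hfb' : ∀ t : ℝ, 0 ≤ t → |derivWithin f (Set.Ici 0) t| ≤ M * Real.exp (σ * t)) :
    ∀ s : ℝ, σ < s →
      ∫ t in Set.Ioi (0 : ℝ), Real.exp (-s * t) *
          ((1 / Real.Gamma (1 - α)) *
            ∫ u in (0 : ℝ)..t, (t - u) ^ (-α) * derivWithin f (Set.Ici 0) u) =
        s ^ α * ∫ t in Set.Ioi (0 : ℝ), Real.exp (-s * t) * f t := by
  intro s hs
  have hs0 : 0 < s := lt_of_le_of_lt hσ hs
  have hb : 0 < s - σ := sub_pos.2 hs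
  have hgc : ContinuousOn (derivWithin f (Set.Ici 0)) (Set.Ici 0) :=
    hf.continuousOn_derivWithin (uniqueDiffOn_Ici 0) le_rfl
  set G : ℝ → ℝ := fun u => derivWithin f (Set.Ici 0) (max u 0) with hGdef
  have hGcont : Continuous G :=
    hgc.comp_continuous (continuous_id.max continuous_const) (fun x => Set.mem_Ici.2 (le_max_right _ _))
  have hGeq : ∀ u : ℝ, 0 ≤ u → G u = derivWithin f (Set.Ici 0) u := by
    intro u hu; simp [hGdef, max_eq_left hu]
  have hGb : ∀ u : ℝ, 0 ≤ u → |G u| ≤ M * Real.exp (σ * u) := by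
    intro u hu; rw [hGeq u hu]; exact hfb' u hu
  have hfc : ContinuousOn f (Set.Ici 0) := hf.continuousOn
  have hderiv : ∀ t : ℝ, 0 < t → HasDerivAt f (G t) t := by
    intro t ht
    have h1 : HasDerivWithinAt f (derivWithin f (Set.Ici 0) t) (Set.Ici 0) t :=
      ((hf.differentiableOn one_ne_zero) t (le_of_lt ht)).hasDerivWithinAt
    rw [hGeq t ht.le]
    exact h1.hasDerivAt (Ici_mem_nhds ht)
  -- integrability of Laplace integrands
  have hexp : IntegrableOn (fun t : ℝ => M * Real.exp (-(s - σ) * t)) (Set.Ioi 0) :=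
    (exp_neg_integrableOn_Ioi 0 hb).const_mul M
  have hbound : ∀ (h : ℝ → ℝ), (∀ t : ℝ, 0 ≤ t → |h t| ≤ M * Real.exp (σ * t)) →
      ∀ t : ℝ, 0 ≤ t → ‖Real.exp (-s * t) * h t‖ ≤ M * Real.exp (-(s - σ) * t) := by
    intro h hh t ht0
    have : ‖Real.exp (-s * t) * h t‖ = Real.exp (-s * t) * |h t| := by
      rw [norm_mul, Real.norm_eq_abs, abs_of_pos (Real.exp_pos _), Real.norm_eq_abs]
    rw [this]
    calc Real.exp (-s * t) * |h t| ≤ Real.exp (-s * t) * (M * Real.exp (σ * t)) := by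
          exact mul_le_mul_of_nonneg_left (hh t ht0) (Real.exp_pos _).le
      _ = M * Real.exp (-(s - σ) * t) := by
          rw [show -(s - σ) * t = -s * t + σ * t by ring, Real.exp_add]; ring
  have hLf : IntegrableOn (fun t : ℝ => Real.exp (-s * t) * f t) (Set.Ioi 0) := by
    refine hexp.mono' ?_ ?_
    · exact ((Real.continuous_exp.comp (continuous_const.mul continuous_id)).continuousOn.mul
        (hfc.mono Set.Ioi_subset_Ici_self)).aestronglyMeasurable measurableSet_Ioi
    · exact (ae_restrict_iff' measurableSet_Ioi).2 (ae_of_all _ (fun t ht => hbound f hfb t ht.le))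
  have hLG : IntegrableOn (fun t : ℝ => Real.exp (-s * t) * G t) (Set.Ioi 0) := by
    refine hexp.mono' ?_ ?_
    · exact ((Real.continuous_exp.comp (continuous_const.mul continuous_id)).mul
        hGcont).aestronglyMeasurable.restrict
    · exact (ae_restrict_iff' measurableSet_Ioi).2 (ae_of_all _ (fun t ht => hbound G hGb t ht.le))
  -- integration by parts : Laplace of derivative
  have hIBP : ∫ t in Set.Ioi (0:ℝ), Real.exp (-s * t) * G t
      = s * ∫ t in Set.Ioi (0:ℝ), Real.exp (-s * t) * f t := by
    have hF : ∀ t ∈ Set.Ioi (0:ℝ), HasDerivAt (fun t => Real.exp (-s * t) * f t)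
        (Real.exp (-s * t) * G t - s * (Real.exp (-s * t) * f t)) t := by
      intro t ht
      have h1 : HasDerivAt (fun t : ℝ => Real.exp (-s * t)) (-s * Real.exp (-s * t)) t := by
        simpa [mul_comm] using ((hasDerivAt_id t).const_mul (-s)).exp
      have h2 := h1.mul (hderiv t ht)
      exact h2.congr_deriv (by ring)
    have hint : IntegrableOn (fun t : ℝ =>
        Real.exp (-s * t) * G t - s * (Real.exp (-s * t) * f t)) (Set.Ioi 0) :=
      hLG.sub (hLf.const_mul s)
    have hcont0 : ContinuousWithinAt (fun t : ℝ => Real.exp (-s * t) * f t) (Set.Ici 0) 0 :=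
      ((Real.continuous_exp.comp (continuous_const.mul continuous_id)).continuousOn.mul hfc) 0
        Set.self_mem_Ici
    have htend : Filter.Tendsto (fun t : ℝ => Real.exp (-s * t) * f t) Filter.atTop (nhds 0) := by
      have hM0 : Filter.Tendsto (fun t : ℝ => M * Real.exp (-(s - σ) * t)) Filter.atTop (nhds 0) := by
        have h1 : Filter.Tendsto (fun t : ℝ => (s - σ) * t) Filter.atTop Filter.atTop :=
          Filter.Tendsto.const_mul_atTop hb Filter.tendsto_id
        have h2 : Filter.Tendsto (fun t : ℝ => M * Real.exp (-(s - σ) * t)) Filter.atTop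
            (nhds (M * 0)) := by
          refine ((Real.tendsto_exp_neg_atTop_nhds_zero.comp h1).const_mul M).congr fun t => ?_
          simp only [Function.comp_apply]
          rw [neg_mul]
        simpa using h2
      have hM0' : Filter.Tendsto (fun t : ℝ => -(M * Real.exp (-(s - σ) * t))) Filter.atTop (nhds 0) := by
        simpa using hM0.neg
      refine tendsto_of_tendsto_of_tendsto_of_le_of_le' hM0' hM0 ?_ ?_
      · filter_upwards [Filter.eventually_ge_atTop (0:ℝ)] with t ht
        have h3 := hbound f hfb t ht
        rw [Real.norm_eq_abs, abs_le] at h3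
        exact h3.1
      · filter_upwards [Filter.eventually_ge_atTop (0:ℝ)] with t ht
        have h3 := hbound f hfb t ht
        rw [Real.norm_eq_abs, abs_le] at h3
        exact h3.2
    have key := integral_Ioi_of_hasDerivAt_of_tendsto hcont0 hF hint htend
    rw [integral_sub hLG (hLf.const_mul s), integral_const_mul] at key
    have h0 : Real.exp (-s * 0) * f 0 = 0 := by simp [hf0]
    rw [h0, sub_zero] at key
    linarith
  -- the kernel for Fubini
  set K : ℝ × ℝ → ℝ := fun p =>
    if p.2 < p.1 then Real.exp (-s * p.1) * (p.1 - p.2) ^ (-α) * G p.2 else 0 with hKdef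
  have hKmeas : Measurable K := by
    have hKalt : K = fun p : ℝ × ℝ => if p.2 < p.1 then
        Real.exp (-s * p.1) * Real.exp (Real.log (p.1 - p.2) * (-α)) * G p.2 else 0 := by
      funext p
      by_cases h : p.2 < p.1
      · simp only [hKdef, if_pos h]
        rw [Real.rpow_def_of_pos (sub_pos.2 h)]
      · simp only [hKdef, if_neg h]
    rw [hKalt]
    refine Measurable.ite (measurableSet_lt measurable_snd measurable_fst) ?_ measurable_const
    exact ((Real.measurable_exp.comp (measurable_fst.const_mul (-s))).mul
      (Real.measurable_exp.comp
        ((Real.measurable_log.comp (measurable_fst.sub measurable_snd)).mul_const (-α)))).mul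
      (hGcont.measurable.comp measurable_snd)
  -- slice integrability
  have hslice : ∀ t : ℝ, 0 < t →
      IntegrableOn (fun u => Real.exp (-s * t) * (t - u) ^ (-α) * G u) (Set.Ioo 0 t) := by
    intro t ht
    refine ((aux_rpow_integrable hα0 hα1 ht).const_mul (M * Real.exp (σ * t))).mono' ?_ ?_
    · refine (((continuous_const.continuousOn.mul
        (((continuous_const.sub continuous_id).continuousOn).rpow_const
          fun u hu => Or.inl (ne_of_gt (sub_pos.2 hu.2)))).mul
        hGcont.continuousOn)).aestronglyMeasurable measurableSet_Ioo
    · refine (ae_restrict_iff' measurableSet_Ioo).2 (ae_of_all _ fun u hu => ?_)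
      have h1 : (0:ℝ) ≤ (t - u) ^ (-α) := Real.rpow_nonneg (sub_pos.2 hu.2).le _
      have h2 : |G u| ≤ M * Real.exp (σ * t) := by
        refine le_trans (hGb u hu.1.le) ?_
        exact mul_le_mul_of_nonneg_left (Real.exp_le_exp.2
          (mul_le_mul_of_nonneg_left hu.2.le hσ)) hM.le
      have h3 : Real.exp (-s * t) ≤ 1 := Real.exp_le_one_iff.2 (by nlinarith)
      have : ‖Real.exp (-s * t) * (t - u) ^ (-α) * G u‖
          = Real.exp (-s * t) * (t - u) ^ (-α) * |G u| := by
        rw [norm_mul, norm_mul, Real.norm_eq_abs, Real.norm_eq_abs, Real.norm_eq_abs,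
          abs_of_pos (Real.exp_pos _), abs_of_nonneg h1]
      rw [this]
      calc Real.exp (-s * t) * (t - u) ^ (-α) * |G u|
          ≤ 1 * (t - u) ^ (-α) * (M * Real.exp (σ * t)) := by
            apply mul_le_mul ?_ h2 (abs_nonneg _) (by positivity)
            exact mul_le_mul_of_nonneg_right h3 h1
        _ = M * Real.exp (σ * t) * (t - u) ^ (-α) := by ring
  have hKslice_eq : ∀ t : ℝ, (fun u => K (t, u))
      = Set.indicator (Set.Iio t) (fun u => Real.exp (-s * t) * (t - u) ^ (-α) * G u) := by
    intro t
    funext u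
    by_cases h : u < t <;> simp [hKdef, Set.indicator_apply, h]
  have hIoo : ∀ t : ℝ, Set.Iio t ∩ Set.Ioi (0:ℝ) = Set.Ioo 0 t := by
    intro t; rw [Set.inter_comm, Set.Ioi_inter_Iio]
  have hKslice : ∀ t : ℝ, 0 < t → Integrable (fun u => K (t, u)) (volume.restrict (Set.Ioi 0)) := by
    intro t ht
    rw [hKslice_eq t, integrable_indicator_iff measurableSet_Iio, IntegrableOn,
      Measure.restrict_restrict measurableSet_Iio, hIoo t]
    exact hslice t ht
  -- pointwise bound for the iterated norm integral
  have hnorm_le : ∀ t : ℝ, 0 < t → (∫ u in Set.Ioi (0:ℝ), ‖K (t, u)‖)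
      ≤ M / (1 - α) * (t ^ (1 - α) * Real.exp (-(s - σ) * t)) := by
    intro t ht
    have hnormeq : (fun u => ‖K (t, u)‖)
        = Set.indicator (Set.Iio t) (fun u => ‖Real.exp (-s * t) * (t - u) ^ (-α) * G u‖) := by
      funext u
      by_cases h : u < t <;> simp [hKdef, Set.indicator_apply, h]
    have h1 : (∫ u in Set.Ioi (0:ℝ), ‖K (t, u)‖)
        = ∫ u in Set.Ioo 0 t, ‖Real.exp (-s * t) * (t - u) ^ (-α) * G u‖ := by
      rw [hnormeq, setIntegral_indicator measurableSet_Iio, Set.inter_comm, hIoo t]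
    rw [h1]
    have h2 : ∫ u in Set.Ioo 0 t, ‖Real.exp (-s * t) * (t - u) ^ (-α) * G u‖
        ≤ ∫ u in Set.Ioo 0 t, (M * Real.exp (σ * t) * Real.exp (-s * t)) * (t - u) ^ (-α) := by
      refine setIntegral_mono_on (hslice t ht).norm
        ((aux_rpow_integrable hα0 hα1 ht).const_mul _) measurableSet_Ioo fun u hu => ?_
      have h1' : (0:ℝ) ≤ (t - u) ^ (-α) := Real.rpow_nonneg (sub_pos.2 hu.2).le _
      have h2' : |G u| ≤ M * Real.exp (σ * t) := by
        refine le_trans (hGb u hu.1.le) ?_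
        exact mul_le_mul_of_nonneg_left (Real.exp_le_exp.2
          (mul_le_mul_of_nonneg_left hu.2.le hσ)) hM.le
      have : ‖Real.exp (-s * t) * (t - u) ^ (-α) * G u‖
          = Real.exp (-s * t) * (t - u) ^ (-α) * |G u| := by
        rw [norm_mul, norm_mul, Real.norm_eq_abs, Real.norm_eq_abs, Real.norm_eq_abs,
          abs_of_pos (Real.exp_pos _), abs_of_nonneg h1']
      rw [this]
      calc Real.exp (-s * t) * (t - u) ^ (-α) * |G u|
          ≤ Real.exp (-s * t) * (t - u) ^ (-α) * (M * Real.exp (σ * t)) :=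
            mul_le_mul_of_nonneg_left h2' (by positivity)
        _ = (M * Real.exp (σ * t) * Real.exp (-s * t)) * (t - u) ^ (-α) := by ring
    refine le_trans h2 ?_
    rw [integral_const_mul, aux_rpow_integral hα0 hα1 ht]
    rw [show -(s - σ) * t = σ * t + -s * t by ring, Real.exp_add]
    rw [div_eq_mul_inv, div_eq_mul_inv]
    ring_nf
    exact le_refl _
  -- integrability on the product
  have hφ : Integrable (fun t : ℝ => M / (1 - α) * (t ^ (1 - α) * Real.exp (-(s - σ) * t)))
      (volume.restrict (Set.Ioi 0)) := by
    have h0 := integrableOn_rpow_mul_exp_neg_mul_rpow (p := 1) (s := 1 - α) (b := s - σ)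
      (by linarith) zero_lt_one hb
    have h2 : IntegrableOn (fun t : ℝ => t ^ (1 - α) * Real.exp (-(s - σ) * t)) (Set.Ioi 0) := by
      simpa [Real.rpow_one] using h0
    exact h2.const_mul _
  have hKint : Integrable K ((volume.restrict (Set.Ioi 0)).prod (volume.restrict (Set.Ioi 0))) := by
    rw [integrable_prod_iff hKmeas.aestronglyMeasurable]
    constructor
    · exact (ae_restrict_iff' measurableSet_Ioi).2 (ae_of_all _ fun t ht => hKslice t ht)
    · refine hφ.mono' (hKmeas.norm.aestronglyMeasurable.integral_prod_right') ?_
      refine (ae_restrict_iff' measurableSet_Ioi).2 (ae_of_all _ fun t ht => ?_)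
      rw [Real.norm_eq_abs, abs_of_nonneg (integral_nonneg fun u => norm_nonneg _)]
      exact hnorm_le t ht
  -- swap the integrals
  have hswap : (∫ t in Set.Ioi (0:ℝ), ∫ u in Set.Ioi (0:ℝ), K (t, u))
      = ∫ u in Set.Ioi (0:ℝ), ∫ t in Set.Ioi (0:ℝ), K (t, u) :=
    integral_integral_swap (f := fun t u => K (t, u)) hKint
  -- identify the left-hand side integrand
  have hLHS : ∀ t ∈ Set.Ioi (0:ℝ), Real.exp (-s * t) * ((1 / Real.Gamma (1 - α)) *
        ∫ u in (0:ℝ)..t, (t - u) ^ (-α) * derivWithin f (Set.Ici 0) u)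
      = (1 / Real.Gamma (1 - α)) * ∫ u in Set.Ioi (0:ℝ), K (t, u) := by
    intro t ht
    rw [Set.mem_Ioi] at ht
    have h1 : ∫ u in (0:ℝ)..t, (t - u) ^ (-α) * derivWithin f (Set.Ici 0) u
        = ∫ u in Set.Ioo 0 t, (t - u) ^ (-α) * G u := by
      rw [intervalIntegral.integral_of_le ht.le, integral_Ioc_eq_integral_Ioo]
      refine setIntegral_congr_fun measurableSet_Ioo fun u hu => ?_
      rw [hGeq u hu.1.le]
    have h2 : (∫ u in Set.Ioi (0:ℝ), K (t, u))
        = ∫ u in Set.Ioo 0 t, Real.exp (-s * t) * (t - u) ^ (-α) * G u := by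
      rw [hKslice_eq t, setIntegral_indicator measurableSet_Iio, Set.inter_comm, hIoo t]
    have h3 : (∫ u in Set.Ioo 0 t, Real.exp (-s * t) * (t - u) ^ (-α) * G u)
        = Real.exp (-s * t) * ∫ u in Set.Ioo 0 t, (t - u) ^ (-α) * G u := by
      rw [← integral_const_mul]
      refine setIntegral_congr_fun measurableSet_Ioo fun u hu => ?_
      ring
    rw [h1, h2, h3]
    ring
  -- identify the inner integral after swapping
  have hInner : ∀ u ∈ Set.Ioi (0:ℝ), (∫ t in Set.Ioi (0:ℝ), K (t, u))
      = (Real.Gamma (1 - α) * s ^ (α - 1)) * (Real.exp (-s * u) * G u) := by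
    intro u hu
    rw [Set.mem_Ioi] at hu
    have h1 : (fun t => K (t, u))
        = Set.indicator (Set.Ioi u) (fun t => Real.exp (-s * t) * (t - u) ^ (-α) * G u) := by
      funext t
      by_cases h : u < t <;> simp [hKdef, Set.indicator_apply, h]
    rw [h1, setIntegral_indicator measurableSet_Ioi]
    have h2 : Set.Ioi (0:ℝ) ∩ Set.Ioi u = Set.Ioi u := by
      rw [Set.Ioi_inter_Ioi, max_eq_right hu.le]
    rw [h2]
    have h3 : (∫ t in Set.Ioi u, Real.exp (-s * t) * (t - u) ^ (-α) * G u)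
        = (∫ t in Set.Ioi u, Real.exp (-s * t) * (t - u) ^ (-α)) * G u :=
      integral_mul_const _ _
    rw [h3, aux_gamma_shift hα0 hα1 hs0 u]
    ring
  -- put everything together
  have hΓ : 0 < Real.Gamma (1 - α) := Real.Gamma_pos_of_pos (by linarith)
  have hpow : s ^ (α - 1) * s = s ^ α := by
    nth_rewrite 2 [← Real.rpow_one s]
    rw [← Real.rpow_add hs0]
    norm_num
  rw [setIntegral_congr_fun measurableSet_Ioi hLHS, integral_const_mul, hswap,
    setIntegral_congr_fun measurableSet_Ioi hInner, integral_const_mul, hIBP]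
  rw [← hpow]
  field_simp
end
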